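/- Let d > −1 with d ≠ 0, let p be a probability vector on n ≥ 2 symbols, and let j be any index. Then for every positive integer λ there exists a codeword-length vector l with R^d(p,l) < λ + (1/d)·log₂( p_j^(1+d) + 2^d·(1−p_j)^(1+d)·(2^λ − 1)^(−d) ). Consequently, the optimal exponential redundancy satisfies R^d_opt(p) < λ + (1/d)·log₂( p_j^(1+d) + 2^d·(1−p_j)^(1+d)·(2^λ − 1)^(−d) ) for every positive integer λ. -/

import Mathlib

open Real Finset

/-- A valid codeword-length vector: all lengths at least 1 and the Kraft inequality holds. -/
def IsCode (n : ℕ) (l : Fin n → ℕ) : Prop :=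
  (∀ i, 1 ≤ l i) ∧ ∑ i, (2 : ℝ) ^ (-(l i : ℝ)) ≤ 1

/-- Exponential redundancy `R^d(p,l)`. -/
noncomputable def expRedundancy (n : ℕ) (d : ℝ) (p : Fin n → ℝ) (l : Fin n → ℕ) : ℝ :=
  (1 / d) * Real.logb 2 (∑ i, (p i) ^ (1 + d) * (2 : ℝ) ^ (d * (l i : ℝ)))

/-- Optimal exponential redundancy `R^d_opt(p)`. -/
noncomputable def expRedundancyOpt (n : ℕ) (d : ℝ) (p : Fin n → ℝ) : ℝ :=
  sInf { r | ∃ l : Fin n → ℕ, IsCode n l ∧ r = expRedundancy n d p l }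

lemma bdd_aux (n : ℕ) (d : ℝ) (hd0 : d ≠ 0) (p : Fin n → ℝ) (hp : ∀ i, 0 < p i)
    (j : Fin n) :
    BddBelow { r | ∃ l : Fin n → ℕ, IsCode n l ∧ r = expRedundancy n d p l } := by
  have h2 : (1:ℝ) < 2 := one_lt_two
  have hSpos : ∀ l' : Fin n → ℕ, 0 < ∑ i, (p i) ^ (1 + d) * (2 : ℝ) ^ (d * (l' i : ℝ)) := by
    intro l'
    refine Finset.sum_pos (fun i _ => mul_pos (Real.rpow_pos_of_pos (hp i) _)
      (Real.rpow_pos_of_pos two_pos _)) ⟨j, mem_univ j⟩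
  rcases lt_or_gt_of_ne hd0 with hneg | hpos
  · refine ⟨(1/d) * Real.logb 2 (∑ i, (p i) ^ (1 + d) * (2 : ℝ) ^ (d * (1:ℝ))), ?_⟩
    rintro r ⟨l', ⟨hl'1, _⟩, rfl⟩
    have hle : ∑ i, (p i) ^ (1 + d) * (2 : ℝ) ^ (d * (l' i : ℝ)) ≤
        ∑ i, (p i) ^ (1 + d) * (2 : ℝ) ^ (d * (1:ℝ)) := by
      refine Finset.sum_le_sum (fun i _ => ?_)
      refine mul_le_mul_of_nonneg_left ?_ (Real.rpow_pos_of_pos (hp i) _).le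
      refine (Real.rpow_le_rpow_left_iff h2).mpr ?_
      have : (1:ℝ) ≤ (l' i : ℝ) := by exact_mod_cast hl'1 i
      nlinarith
    have hC : 0 < ∑ i, (p i) ^ (1 + d) * (2 : ℝ) ^ (d * (1:ℝ)) :=
      lt_of_lt_of_le (hSpos l') hle
    have hlog := (Real.logb_le_logb h2 (hSpos l') hC).mpr hle
    have h1d : 1/d ≤ 0 := by
      apply le_of_lt; exact one_div_neg.mpr hneg
    unfold expRedundancy
    nlinarith [mul_le_mul_of_nonpos_left hlog h1d]
  · refine ⟨(1/d) * Real.logb 2 ((p j) ^ (1 + d) * (2 : ℝ) ^ (d * (1:ℝ))), ?_⟩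
    rintro r ⟨l', ⟨hl'1, _⟩, rfl⟩
    have hterm : (p j) ^ (1 + d) * (2 : ℝ) ^ (d * (1:ℝ)) ≤
        (p j) ^ (1 + d) * (2 : ℝ) ^ (d * (l' j : ℝ)) := by
      refine mul_le_mul_of_nonneg_left ?_ (Real.rpow_pos_of_pos (hp j) _).le
      refine (Real.rpow_le_rpow_left_iff h2).mpr ?_
      have : (1:ℝ) ≤ (l' j : ℝ) := by exact_mod_cast hl'1 j
      nlinarith
    have hle : (p j) ^ (1 + d) * (2 : ℝ) ^ (d * (1:ℝ)) ≤
        ∑ i, (p i) ^ (1 + d) * (2 : ℝ) ^ (d * (l' i : ℝ)) := by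
      refine hterm.trans (Finset.single_le_sum
        (f := fun i => (p i) ^ (1 + d) * (2 : ℝ) ^ (d * (l' i : ℝ))) (fun i _ =>
        (mul_pos (Real.rpow_pos_of_pos (hp i) _) (Real.rpow_pos_of_pos two_pos _)).le)
        (mem_univ j))
    have hC : 0 < (p j) ^ (1 + d) * (2 : ℝ) ^ (d * (1:ℝ)) :=
      mul_pos (Real.rpow_pos_of_pos (hp j) _) (Real.rpow_pos_of_pos two_pos _)
    have hlog := (Real.logb_le_logb h2 hC (hSpos l')).mpr hle
    have h1d : 0 ≤ 1/d := by positivity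
    unfold expRedundancy
    nlinarith [mul_le_mul_of_nonneg_left hlog h1d]

theorem main_ineq (n : ℕ) (hn : 2 ≤ n) (d : ℝ) (hd : -1 < d) (hd0 : d ≠ 0)
    (p : Fin n → ℝ) (hp : ∀ i, 0 < p i) (hpsum : ∑ i, p i = 1) (j : Fin n)
    (lam : ℕ) (hlam : 1 ≤ lam) :
    ∃ l : Fin n → ℕ, IsCode n l ∧
      expRedundancy n d p l < (lam : ℝ) + (1 / d) * Real.logb 2
        ((p j) ^ (1 + d) +
          (2 : ℝ) ^ d * (1 - p j) ^ (1 + d) * ((2 : ℝ) ^ (lam : ℝ) - 1) ^ (-d)) := by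
  have h2 : (1:ℝ) < 2 := one_lt_two
  have h2ne : (2:ℝ) ≠ 1 := by norm_num
  have hlr1 : (1:ℝ) ≤ (lam:ℝ) := by exact_mod_cast hlam
  set A : ℝ := 1 - 2 ^ (-(lam:ℝ)) with hA_def
  have h2lpos : (0:ℝ) < 2 ^ (-(lam:ℝ)) := Real.rpow_pos_of_pos two_pos _
  have h2l1 : (2:ℝ) ^ (-(lam:ℝ)) < 1 := by
    have h : (2:ℝ) ^ (-(lam:ℝ)) < (2:ℝ) ^ (0:ℝ) := by
      apply (Real.rpow_lt_rpow_left_iff h2).mpr; linarith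
    simpa using h
  have hA : 0 < A := by simp only [hA_def]; linarith
  have hA1 : A < 1 := by simp only [hA_def]; linarith
  obtain ⟨k, hkj⟩ := Fintype.exists_ne_of_one_lt_card (by simp; omega) j
  have hsum_erase : ∑ i ∈ univ.erase j, p i = 1 - p j := by
    have h := Finset.add_sum_erase univ p (mem_univ j)
    linarith
  have hne : (univ.erase j).Nonempty := ⟨k, Finset.mem_erase.mpr ⟨hkj, mem_univ k⟩⟩
  have h1pj : 0 < 1 - p j := by
    have hpos : 0 < ∑ i ∈ univ.erase j, p i := Finset.sum_pos (fun i _ => hp i) hne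
    linarith
  set K : ℝ := (1 - p j) / A with hK_def
  have hK : 0 < K := div_pos h1pj hA
  set x : Fin n → ℝ := fun i => Real.logb 2 (K / p i) with hx_def
  set l : Fin n → ℕ := fun i => if i = j then lam else (⌈x i⌉).toNat with hl_def
  have hpile : ∀ i, i ≠ j → p i ≤ 1 - p j := by
    intro i hij
    rw [← hsum_erase]
    exact Finset.single_le_sum (fun i _ => (hp i).le)
      (Finset.mem_erase.mpr ⟨hij, mem_univ i⟩)
  have hrgt1 : ∀ i, i ≠ j → 1 < K / p i := by
    intro i hij
    rw [lt_div_iff₀ (hp i), one_mul]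
    have h1 : 1 - p j < K := by
      rw [hK_def, lt_div_iff₀ hA]; nlinarith
    exact lt_of_le_of_lt (hpile i hij) h1
  have hxpos : ∀ i, i ≠ j → 0 < x i := fun i hij => Real.logb_pos h2 (hrgt1 i hij)
  have hceil : ∀ i, i ≠ j → (1:ℤ) ≤ ⌈x i⌉ := fun i hij =>
    Int.ceil_pos.mpr (hxpos i hij)
  have hlcast : ∀ i, i ≠ j → ((l i : ℝ)) = ((⌈x i⌉ : ℤ) : ℝ) := by
    intro i hij
    simp only [hl_def, if_neg hij]
    exact_mod_cast congrArg (Int.cast : ℤ → ℝ)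
      (Int.toNat_of_nonneg (le_trans zero_le_one (hceil i hij)))
  have hlge : ∀ i, i ≠ j → x i ≤ (l i : ℝ) := by
    intro i hij; rw [hlcast i hij]; exact Int.le_ceil _
  have hllt : ∀ i, i ≠ j → (l i : ℝ) < x i + 1 := by
    intro i hij; rw [hlcast i hij]; exact Int.ceil_lt_add_one _
  have hlj : l j = lam := by simp [hl_def]
  -- IsCode
  have hl1 : ∀ i, 1 ≤ l i := by
    intro i
    by_cases hij : i = j
    · simp [hl_def, hij, hlam]
    · simp only [hl_def, if_neg hij]
      have := hceil i hij; omega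
  have hkraft : ∑ i, (2 : ℝ) ^ (-(l i : ℝ)) ≤ 1 := by
    have hsplit : ∑ i, (2 : ℝ) ^ (-(l i : ℝ)) =
        (2:ℝ) ^ (-(lam:ℝ)) + ∑ i ∈ univ.erase j, (2 : ℝ) ^ (-(l i : ℝ)) := by
      rw [← Finset.add_sum_erase univ _ (mem_univ j), hlj]
    have hbound : ∑ i ∈ univ.erase j, (2 : ℝ) ^ (-(l i : ℝ)) ≤ A := by
      have hterm : ∀ i ∈ univ.erase j, (2:ℝ) ^ (-(l i : ℝ)) ≤ p i * (A / (1 - p j)) := by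
        intro i hi
        have hij := (Finset.mem_erase.mp hi).1
        have h1 : (2:ℝ) ^ (-(l i : ℝ)) ≤ 2 ^ (-(x i)) :=
          (Real.rpow_le_rpow_left_iff h2).mpr (neg_le_neg (hlge i hij))
        have h2' : (2:ℝ) ^ (-(x i)) = p i * (A / (1 - p j)) := by
          rw [Real.rpow_neg (by norm_num : (0:ℝ) ≤ 2), hx_def,
            Real.rpow_logb two_pos h2ne (div_pos hK (hp i))]
          rw [hK_def]
          field_simp
        linarith
      calc ∑ i ∈ univ.erase j, (2 : ℝ) ^ (-(l i : ℝ))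
          ≤ ∑ i ∈ univ.erase j, p i * (A / (1 - p j)) := Finset.sum_le_sum hterm
        _ = (∑ i ∈ univ.erase j, p i) * (A / (1 - p j)) := (Finset.sum_mul _ _ _).symm
        _ = A := by rw [hsum_erase]; field_simp
    rw [hsplit]
    simp only [hA_def] at hbound
    linarith
  refine ⟨l, ⟨hl1, hkraft⟩, ?_⟩
  -- the sums
  set S : ℝ := ∑ i, (p i) ^ (1 + d) * (2 : ℝ) ^ (d * (l i : ℝ)) with hS_def
  set T : ℝ := (p j) ^ (1 + d) * (2:ℝ) ^ (d * (lam:ℝ)) + (1 - p j) * ((2:ℝ)^d * K^d)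
    with hT_def
  have hSsplit : S = (p j) ^ (1 + d) * (2:ℝ) ^ (d * (lam:ℝ)) +
      ∑ i ∈ univ.erase j, (p i) ^ (1 + d) * (2 : ℝ) ^ (d * (l i : ℝ)) := by
    rw [hS_def, ← Finset.add_sum_erase univ _ (mem_univ j), hlj]
  have hterm_id : ∀ i, i ≠ j →
      (p i) ^ (1 + d) * (2:ℝ) ^ (d * (x i + 1)) = p i * ((2:ℝ)^d * K^d) := by
    intro i hij
    have e1 : (2:ℝ) ^ (d * (x i + 1)) = (2:ℝ) ^ (x i * d) * 2 ^ d := by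
      rw [← Real.rpow_add two_pos]; ring_nf
    have e2 : (2:ℝ) ^ (x i * d) = (K / p i) ^ d := by
      rw [Real.rpow_mul (by norm_num : (0:ℝ) ≤ 2), hx_def,
        Real.rpow_logb two_pos h2ne (div_pos hK (hp i))]
    have e3 : (K / p i) ^ d = K ^ d / (p i) ^ d := Real.div_rpow hK.le (hp i).le d
    have e4 : (p i) ^ (1 + d) / (p i) ^ d = p i := by
      rw [← Real.rpow_sub (hp i)]
      norm_num
    rw [e1, e2, e3]
    calc (p i) ^ (1 + d) * ((K ^ d / (p i) ^ d) * 2 ^ d)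
        = ((p i) ^ (1 + d) / (p i) ^ d) * K ^ d * 2 ^ d := by ring
      _ = p i * ((2:ℝ)^d * K^d) := by rw [e4]; ring
  have hsum_rhs : ∑ i ∈ univ.erase j, p i * ((2:ℝ)^d * K^d)
      = (1 - p j) * ((2:ℝ)^d * K^d) := by
    rw [← Finset.sum_mul, hsum_erase]
  have hSpos : 0 < S := by
    refine Finset.sum_pos (fun i _ => mul_pos (Real.rpow_pos_of_pos (hp i) _)
      (Real.rpow_pos_of_pos two_pos _)) ⟨j, mem_univ j⟩
  have hTpos : 0 < T := by
    refine add_pos (mul_pos (Real.rpow_pos_of_pos (hp j) _)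
      (Real.rpow_pos_of_pos two_pos _)) (mul_pos h1pj (mul_pos
      (Real.rpow_pos_of_pos two_pos _) (Real.rpow_pos_of_pos hK _)))
  -- rewrite RHS bracket
  set B : ℝ := (p j) ^ (1 + d) +
      (2 : ℝ) ^ d * (1 - p j) ^ (1 + d) * ((2 : ℝ) ^ (lam : ℝ) - 1) ^ (-d) with hB_def
  have h2lam : (0:ℝ) < 2 ^ ((lam:ℝ)) - 1 := by
    have h : (2:ℝ) ^ (0:ℝ) < (2:ℝ) ^ ((lam:ℝ)) := by
      apply (Real.rpow_lt_rpow_left_iff h2).mpr; linarith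
    simp only [Real.rpow_zero] at h
    linarith
  have hBpos : 0 < B := by
    refine add_pos (Real.rpow_pos_of_pos (hp j) _) (mul_pos (mul_pos
      (Real.rpow_pos_of_pos two_pos _) (Real.rpow_pos_of_pos h1pj _))
      (Real.rpow_pos_of_pos h2lam _))
  have hTB : T = (2:ℝ) ^ (d * (lam:ℝ)) * B := by
    have hbr : (2:ℝ) ^ ((lam:ℝ)) - 1 = 2 ^ ((lam:ℝ)) * A := by
      rw [hA_def, mul_sub, mul_one, ← Real.rpow_add two_pos]
      simp
    have h2lampos : (0:ℝ) < 2 ^ ((lam:ℝ)) := Real.rpow_pos_of_pos two_pos _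
    have key : ((2:ℝ) ^ ((lam:ℝ)) - 1) ^ (-d) = (2:ℝ) ^ (-(d * (lam:ℝ))) * A ^ (-d) := by
      rw [hbr, Real.mul_rpow h2lampos.le hA.le,
        ← Real.rpow_mul (by norm_num : (0:ℝ) ≤ 2)]
      congr 2
      ring
    have hKd : K ^ d = (1 - p j) ^ d * (A ^ d)⁻¹ := by
      rw [hK_def, Real.div_rpow h1pj.le hA.le, div_eq_mul_inv]
    have hpj1d : (1 - p j) * (1 - p j) ^ d = (1 - p j) ^ (1 + d) := by
      rw [Real.rpow_add h1pj, Real.rpow_one]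
    have hAneg : A ^ (-d) = (A ^ d)⁻¹ := Real.rpow_neg hA.le d
    have h2dd : (2:ℝ) ^ (d * (lam:ℝ)) * (2:ℝ) ^ (-(d * (lam:ℝ))) = 1 := by
      rw [← Real.rpow_add two_pos]; simp
    rw [hT_def, hB_def, key, hKd, hAneg, ← hpj1d]
    linear_combination (-((2:ℝ)^d * ((1 - p j) * (1 - p j)^d) * (A^d)⁻¹)) * h2dd
  have hbracket : (lam:ℝ) + (1/d) * Real.logb 2 B = (1/d) * Real.logb 2 T := by
    rw [hTB, Real.logb_mul (ne_of_gt (Real.rpow_pos_of_pos two_pos _)) (ne_of_gt hBpos),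
      Real.logb_rpow two_pos h2ne]
    field_simp
  rw [hbracket]
  show (1/d) * Real.logb 2 S < (1/d) * Real.logb 2 T
  rcases lt_or_gt_of_ne hd0 with hneg | hpos
  · have hlt : ∀ i ∈ univ.erase j,
        p i * ((2:ℝ)^d * K^d) < (p i) ^ (1 + d) * (2:ℝ) ^ (d * (l i : ℝ)) := by
      intro i hi
      have hij := (Finset.mem_erase.mp hi).1
      rw [← hterm_id i hij]
      refine mul_lt_mul_of_pos_left ?_ (Real.rpow_pos_of_pos (hp i) _)
      refine (Real.rpow_lt_rpow_left_iff h2).mpr ?_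
      nlinarith [hllt i hij]
    have hTS : T < S := by
      rw [hSsplit, hT_def, ← hsum_rhs]
      exact add_lt_add_right (Finset.sum_lt_sum_of_nonempty hne hlt) _
    exact mul_lt_mul_of_neg_left (Real.logb_lt_logb h2 hTpos hTS) (one_div_neg.mpr hneg)
  · have hlt : ∀ i ∈ univ.erase j,
        (p i) ^ (1 + d) * (2:ℝ) ^ (d * (l i : ℝ)) < p i * ((2:ℝ)^d * K^d) := by
      intro i hi
      have hij := (Finset.mem_erase.mp hi).1
      rw [← hterm_id i hij]
      refine mul_lt_mul_of_pos_left ?_ (Real.rpow_pos_of_pos (hp i) _)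
      refine (Real.rpow_lt_rpow_left_iff h2).mpr ?_
      nlinarith [hllt i hij]
    have hST : S < T := by
      rw [hSsplit, hT_def, ← hsum_rhs]
      exact add_lt_add_right (Finset.sum_lt_sum_of_nonempty hne hlt) _
    exact mul_lt_mul_of_pos_left (Real.logb_lt_logb h2 hSpos hST) (by positivity)

theorem stmt_6 (n : ℕ) (hn : 2 ≤ n) (d : ℝ) (hd : -1 < d) (hd0 : d ≠ 0)
    (p : Fin n → ℝ) (hp : ∀ i, 0 < p i) (hpsum : ∑ i, p i = 1) (j : Fin n) :
    ∀ lam : ℕ, 1 ≤ lam →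
      (∃ l : Fin n → ℕ, IsCode n l ∧
        expRedundancy n d p l < (lam : ℝ) + (1 / d) * Real.logb 2
          ((p j) ^ (1 + d) +
            (2 : ℝ) ^ d * (1 - p j) ^ (1 + d) * ((2 : ℝ) ^ (lam : ℝ) - 1) ^ (-d))) ∧
      expRedundancyOpt n d p < (lam : ℝ) + (1 / d) * Real.logb 2
        ((p j) ^ (1 + d) +
          (2 : ℝ) ^ d * (1 - p j) ^ (1 + d) * ((2 : ℝ) ^ (lam : ℝ) - 1) ^ (-d)) := by
  intro lam hlam
  obtain ⟨l, hcode, hlt⟩ := main_ineq n hn d hd hd0 p hp hpsum j lam hlam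
  refine ⟨⟨l, hcode, hlt⟩, ?_⟩
  have hle : expRedundancyOpt n d p ≤ expRedundancy n d p l :=
    csInf_le (bdd_aux n d hd0 p hp j) ⟨l, hcode, rfl⟩
  exact lt_of_le_of_lt hle hlt
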